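/- Let M be a ℤ_ℓ-module equipped with an action of an element γ such that M is annihilated by γ·u − 1 for a unit u ∈ ℤ_ℓ^× (i.e., γ acts as u^(−1)). If γ acts on a submodule N as the identity composed with multiplication by a unit congruent to 1 mod ℓ, then the elements of M fixed simultaneously by γ^(ℓ^n) and by (γ/(1+ℓ^m))^(ℓ^n) are exactly the elements killed by ℓ^(m+n). -/

import Mathlib

lemma key_int (ℓ : ℕ) (hp : ℓ.Prime) (m n : ℕ) (hm : 1 ≤ m) (hm2 : ℓ = 2 → 2 ≤ m) :
    ∃ c : ℤ, ¬ ((ℓ:ℤ) ∣ c) ∧ (1 + (ℓ:ℤ)^m)^(ℓ^n) - 1 = (ℓ:ℤ)^(m+n) * c := by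
  have hpz : Prime (ℓ:ℤ) := Nat.prime_iff_prime_int.mp hp
  have hnd : ¬ (ℓ:ℤ) ∣ (1 + (ℓ:ℤ)^m) := by
    intro h
    have : (ℓ:ℤ) ∣ 1 := (dvd_add_right (dvd_pow_self (ℓ:ℤ) (show m ≠ 0 by omega))).mp (by rwa [add_comm] at h)
    exact hpz.not_unit (isUnit_of_dvd_one this)
  have hd : (ℓ:ℤ) ∣ (1 + (ℓ:ℤ)^m) - 1 := by
    simpa using dvd_pow_self (ℓ:ℤ) (show m ≠ 0 by omega)
  have hmult : emultiplicity (ℓ:ℤ) ((1 + (ℓ:ℤ)^m)^(ℓ^n) - 1) = ((m+n : ℕ) : ℕ∞) := by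
    have h1 : emultiplicity (ℓ:ℤ) ((1 + (ℓ:ℤ)^m) - 1) = (m : ℕ∞) := by
      simpa using emultiplicity_pow_self_of_prime hpz m
    have h1' : ((1:ℤ))^(ℓ^n) = 1 := one_pow _
    rcases hp.eq_two_or_odd' with h2 | hodd
    · subst h2
      simp only [Nat.cast_ofNat] at h1 hd hnd hpz ⊢
      rcases Nat.eq_zero_or_pos n with rfl | hn
      · simpa using h1
      · have heven : Even (2^n) := (Nat.even_pow' (by omega)).mpr even_two
        have hLTE := Int.two_pow_sub_pow (x := 1 + 2^m)
          (y := 1) hd hnd heven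
        rw [h1', h1] at hLTE
        have hplus : emultiplicity (2:ℤ) ((1 + 2^m) + 1) = (1 : ℕ∞) := by
          have hm2' : 2 ≤ m := hm2 rfl
          have hfac : (1 + (2:ℤ)^m) + 1 = 2 * (1 + 2^(m-1)) := by
            obtain ⟨k, hk⟩ : ∃ k, m = k + 1 := ⟨m - 1, by omega⟩
            rw [hk, Nat.add_sub_cancel, pow_succ]; ring
          rw [hfac, emultiplicity_mul hpz]
          have e1 : emultiplicity (2:ℤ) 2 = (1 : ℕ∞) := by
            simpa using emultiplicity_pow_self_of_prime hpz 1
          have e2 : emultiplicity (2:ℤ) (1 + 2^(m-1)) = (0 : ℕ∞) := by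
            rw [emultiplicity_eq_zero]
            intro h
            have : (2:ℤ) ∣ 1 := (dvd_add_right (dvd_pow_self (2:ℤ) (show m-1 ≠ 0 by omega))).mp
              (by rwa [add_comm] at h)
            norm_num at this
          rw [e1, e2]; rfl
        have hn2 : emultiplicity (2:ℤ) ((2^n : ℕ) : ℤ) = (n : ℕ∞) := by
          push_cast
          simpa using emultiplicity_pow_self_of_prime hpz n
        rw [hplus, hn2] at hLTE
        have : emultiplicity (2:ℤ) ((1 + 2^m)^(2^n) - 1) + 1 = ((m + n : ℕ) : ℕ∞) + 1 := by
          rw [hLTE]; push_cast; ring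
        exact ENat.add_left_injective_of_ne_top (by simp) this
    · have hLTE := Int.emultiplicity_pow_sub_pow hp hodd (x := 1 + (ℓ:ℤ)^m)
        (y := 1) hd hnd (ℓ^n)
      rw [h1', h1] at hLTE
      have hn2 : emultiplicity ℓ (ℓ^n) = (n : ℕ∞) :=
        emultiplicity_pow_self_of_prime hp.prime n
      rw [hn2] at hLTE
      rw [hLTE]; push_cast; ring
  obtain ⟨hdvd, hndvd⟩ := emultiplicity_eq_coe.mp hmult
  obtain ⟨c, hc⟩ := hdvd
  refine ⟨c, ?_, hc⟩
  intro ⟨d, hd'⟩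
  exact hndvd ⟨d, by rw [hc, hd', pow_succ]; ring⟩

lemma key_padic (ℓ : ℕ) [Fact ℓ.Prime] (m n : ℕ) (hm : 1 ≤ m) (hm2 : ℓ = 2 → 2 ≤ m) :
    ∃ u : ℤ_[ℓ], IsUnit u ∧ (1 + (ℓ:ℤ_[ℓ])^m)^(ℓ^n) - 1 = (ℓ:ℤ_[ℓ])^(m+n) * u := by
  obtain ⟨c, hcnd, hc⟩ := key_int ℓ (Fact.out) m n hm hm2
  refine ⟨(c : ℤ_[ℓ]), ?_, ?_⟩
  · rw [PadicInt.isUnit_iff]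
    have hle : ‖(c : ℤ_[ℓ])‖ ≤ 1 := PadicInt.norm_le_one _
    rcases lt_or_eq_of_le hle with hlt | heq
    · exact absurd ((PadicInt.norm_int_lt_one_iff_dvd c).mp hlt)
        (by exact_mod_cast hcnd)
    · exact heq
  · have := congrArg (fun z : ℤ => (z : ℤ_[ℓ])) hc
    push_cast at this
    exact_mod_cast this

/-- Scolie: Let M be a ℤ_ℓ-module with a ℤ_ℓ-linear operator γ, and let
γ* = γ/(1+ℓ^m), so that `x` is fixed by `γ*^(ℓ^n)` iff `γ^(ℓ^n) x = (1+ℓ^m)^(ℓ^n) • x`.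
Then the elements fixed simultaneously by `γ^(ℓ^n)` and `γ*^(ℓ^n)` are exactly the
elements of the `γ^(ℓ^n)`-fixed part killed by `ℓ^(m+n)`. -/
theorem stmt_9 (ℓ : ℕ) [Fact ℓ.Prime] (m n : ℕ) (hm : 1 ≤ m) (hm2 : ℓ = 2 → 2 ≤ m)
    (M : Type) [AddCommGroup M] [Module ℤ_[ℓ] M] (γ : M →ₗ[ℤ_[ℓ]] M) (x : M) :
    ((γ ^ (ℓ ^ n)) x = x ∧ (γ ^ (ℓ ^ n)) x = ((1 + (ℓ : ℤ_[ℓ]) ^ m) ^ (ℓ ^ n)) • x)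
      ↔ ((γ ^ (ℓ ^ n)) x = x ∧ ((ℓ : ℤ_[ℓ]) ^ (m + n)) • x = 0) := by
  obtain ⟨u, hu, hueq⟩ := key_padic ℓ m n hm hm2
  constructor
  · rintro ⟨h1, h2⟩
    refine ⟨h1, ?_⟩
    rw [h1] at h2
    have hz : ((1 + (ℓ:ℤ_[ℓ])^m)^(ℓ^n) - 1) • x = 0 := by
      rw [sub_smul, one_smul, ← h2, sub_self]
    rw [hueq] at hz
    obtain ⟨w, hw1, hw2⟩ := isUnit_iff_exists.mp hu
    have hrw : ((ℓ:ℤ_[ℓ])^(m+n)) = w * ((ℓ:ℤ_[ℓ])^(m+n) * u) := by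
      rw [mul_comm w, mul_assoc, hw1, mul_one]
    rw [hrw, mul_smul, hz, smul_zero]
  · rintro ⟨h1, h2⟩
    refine ⟨h1, ?_⟩
    rw [h1]
    have hz : ((1 + (ℓ:ℤ_[ℓ])^m)^(ℓ^n) - 1) • x = 0 := by
      rw [hueq, mul_comm, mul_smul, h2, smul_zero]
    rw [sub_smul, one_smul, sub_eq_zero] at hz
    exact hz.symm
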